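/- Suppose λ₁ ≤ ρ < (λ₁+λ₂)/2 and let cΘ ∈ [0,1]. Let x be a unit vector with f(x) ≤ ρ and let v be a unit vector with vᵀx = 0 such that |vᵀA x| ≤ cΘ·‖v‖_A·‖x‖_A. Then the quantity J₂ = (8(vᵀM x)/(xᵀM x)²)·vᵀ(Ax − f(x)Mx) satisfies |J₂| ≤ 8κ_ν·ρ·((ρ−λ₁)/λ₁ + √((ρ−λ₁)/λ₁)·cΘ), where κ_ν = ν_max/ν_min. -/

import Mathlib

open Matrix

private lemma aux_expand {N : ℕ} (A M : Matrix (Fin N) (Fin N) ℝ) (hM : M.PosDef)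
    (lam : Fin N → ℝ) (u : Fin N → (Fin N → ℝ))
    (heig : ∀ i, A *ᵥ u i = lam i • (M *ᵥ u i))
    (horth : ∀ i j, u i ⬝ᵥ M *ᵥ u j = if i = j then 1 else 0) :
    ∃ B : Matrix (Fin N) (Fin N) ℝ,
      (∀ y z : Fin N → ℝ, y ⬝ᵥ M *ᵥ z = ∑ i, (B *ᵥ y) i * (B *ᵥ z) i)
      ∧ (∀ y z : Fin N → ℝ, y ⬝ᵥ A *ᵥ z = ∑ i, lam i * ((B *ᵥ y) i * (B *ᵥ z) i)) := by
  have hMsymm : Mᵀ = M := by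
    have := hM.1
    simpa [Matrix.IsHermitian, Matrix.conjTranspose_eq_transpose_of_trivial] using this
  set U : Matrix (Fin N) (Fin N) ℝ := Matrix.of u with hU
  have hent : ∀ (P : Matrix (Fin N) (Fin N) ℝ) i j, (U * P * Uᵀ) i j = u i ⬝ᵥ P *ᵥ u j := by
    intro P i j
    simp only [Matrix.mul_apply, Matrix.transpose_apply, dotProduct, Matrix.mulVec,
      hU, Matrix.of_apply, Finset.sum_mul, Finset.mul_sum]
    rw [Finset.sum_comm]
    apply Finset.sum_congr rfl; intro k _
    apply Finset.sum_congr rfl; intro l _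
    ring
  have h1 : U * M * Uᵀ = 1 := by
    ext i j
    rw [hent, horth]
    simp [Matrix.one_apply]
  have h2 : U * A * Uᵀ = Matrix.diagonal lam := by
    ext i j
    rw [hent, heig j, dotProduct_smul, horth]
    by_cases h : i = j <;> simp [Matrix.diagonal, h]
  have hcomm : Uᵀ * (U * M) = 1 := mul_eq_one_comm.mp h1
  have hUUM : (Uᵀ * U) * M = 1 := by rw [Matrix.mul_assoc]; exact hcomm
  have hMUU : M * (Uᵀ * U) = 1 := mul_eq_one_comm.mp hUUM
  have hMdec : M = (U*M)ᵀ * (U*M) := by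
    rw [Matrix.transpose_mul, hMsymm]
    calc M = M * 1 := by rw [Matrix.mul_one]
    _ = M * (Uᵀ * (U * M)) := by rw [hcomm]
    _ = M * Uᵀ * (U * M) := by rw [Matrix.mul_assoc]
  have hAdec : A = (U*M)ᵀ * Matrix.diagonal lam * (U*M) := by
    rw [← h2, Matrix.transpose_mul, hMsymm]
    calc A = 1 * A * 1 := by rw [Matrix.one_mul, Matrix.mul_one]
    _ = (M * (Uᵀ * U)) * A * ((Uᵀ * U) * M) := by rw [hUUM, hMUU]
    _ = M * Uᵀ * (U * A * Uᵀ) * (U * M) := by simp only [Matrix.mul_assoc]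
  refine ⟨U * M, ?_, ?_⟩
  · intro y z
    conv_lhs => rw [hMdec]
    rw [← Matrix.mulVec_mulVec, Matrix.dotProduct_mulVec, Matrix.vecMul_transpose]
    rfl
  · intro y z
    conv_lhs => rw [hAdec]
    rw [Matrix.mul_assoc, ← Matrix.mulVec_mulVec z ((U*M)ᵀ) (Matrix.diagonal lam * (U*M)),
       Matrix.dotProduct_mulVec, Matrix.vecMul_transpose,
       ← Matrix.mulVec_mulVec z (Matrix.diagonal lam) (U*M)]
    simp only [dotProduct, Matrix.mulVec_diagonal]
    apply Finset.sum_congr rfl; intro k _; ring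

set_option maxHeartbeats 2000000 in
/-- Bound on the term J₂ in the Hessian of the preconditioned Rayleigh quotient. -/
theorem statement_14 {n : ℕ}
    (A M : Matrix (Fin (n+2)) (Fin (n+2)) ℝ)
    (hA : A.PosDef) (hM : M.PosDef)
    (lam : Fin (n+2) → ℝ) (u : Fin (n+2) → (Fin (n+2) → ℝ))
    (hlam_pos : 0 < lam 0) (hgap : lam 0 < lam 1) (hmono : Monotone lam)
    (heig : ∀ i, A *ᵥ u i = lam i • (M *ᵥ u i))
    (horth : ∀ i j, u i ⬝ᵥ M *ᵥ u j = if i = j then 1 else 0)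
    (νmin νmax : ℝ) (hνmin : 0 < νmin) (hνmax : 0 < νmax)
    (hν : ∀ z, νmin * (z ⬝ᵥ z) ≤ z ⬝ᵥ A *ᵥ z ∧ z ⬝ᵥ A *ᵥ z ≤ νmax * (z ⬝ᵥ z))
    (ρ : ℝ) (hρ1 : lam 0 ≤ ρ) (hρ2 : ρ < (lam 0 + lam 1) / 2)
    (cΘ : ℝ) (hcΘ0 : 0 ≤ cΘ) (hcΘ1 : cΘ ≤ 1)
    (x : Fin (n+2) → ℝ) (hxunit : x ⬝ᵥ x = 1)
    (hfx : (x ⬝ᵥ A *ᵥ x) / (x ⬝ᵥ M *ᵥ x) ≤ ρ)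
    (v : Fin (n+2) → ℝ) (hvunit : v ⬝ᵥ v = 1) (hvx : v ⬝ᵥ x = 0)
    (hangle : |v ⬝ᵥ A *ᵥ x| ≤ cΘ * Real.sqrt (v ⬝ᵥ A *ᵥ v) * Real.sqrt (x ⬝ᵥ A *ᵥ x))
    (J₂ : ℝ)
    (hJ₂ : J₂ = 8 * (v ⬝ᵥ M *ᵥ x) / (x ⬝ᵥ M *ᵥ x) ^ 2 *
      (v ⬝ᵥ (A *ᵥ x - ((x ⬝ᵥ A *ᵥ x) / (x ⬝ᵥ M *ᵥ x)) • (M *ᵥ x)))) :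
    |J₂| ≤ 8 * (νmax / νmin) * ρ *
      ((ρ - lam 0) / lam 0 + Real.sqrt ((ρ - lam 0) / lam 0) * cΘ) := by
  obtain ⟨B, hBM, hBA⟩ := aux_expand A M hM lam u heig horth
  rw [hJ₂]
  have hx0 : x ≠ 0 := by
    intro h; rw [h] at hxunit; simp [dotProduct] at hxunit
  set c : Fin (n+2) → ℝ := B *ᵥ x with hc
  set d : Fin (n+2) → ℝ := B *ᵥ v with hd
  set a : ℝ := x ⬝ᵥ M *ᵥ x with ha_def
  set α : ℝ := x ⬝ᵥ A *ᵥ x with hα_def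
  set β : ℝ := v ⬝ᵥ A *ᵥ v with hβ_def
  set q : ℝ := v ⬝ᵥ A *ᵥ x with hq_def
  set m : ℝ := v ⬝ᵥ M *ᵥ x with hm_def
  have ha : 0 < a := by
    have := hM.dotProduct_mulVec_pos hx0
    simpa [ha_def] using this
  -- sum expansions
  have ha_sum : a = ∑ i, c i ^ 2 := by
    rw [ha_def, hBM x x]; apply Finset.sum_congr rfl; intro i _; rw [sq]
  have hα_sum : α = ∑ i, lam i * c i ^ 2 := by
    rw [hα_def, hBA x x]; apply Finset.sum_congr rfl; intro i _; rw [sq]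
  have hq_sum : q = ∑ i, lam i * (d i * c i) := hBA v x
  have hm_sum : m = ∑ i, d i * c i := hBM v x
  -- basic facts
  have hlamle : ∀ i, lam 0 ≤ lam i := fun i => hmono (Fin.zero_le i)
  have hlami : ∀ i, 0 < lam i := fun i => lt_of_lt_of_le hlam_pos (hlamle i)
  have hlama : lam 0 * a ≤ α := by
    rw [hα_sum, ha_sum, Finset.mul_sum]
    exact Finset.sum_le_sum (fun i _ => mul_le_mul_of_nonneg_right (hlamle i) (sq_nonneg _))
  have hαν : νmin ≤ α := by
    have := (hν x).1; rwa [hxunit, mul_one] at this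
  have hαpos : 0 < α := lt_of_lt_of_le hνmin hαν
  have hρpos : 0 < ρ := lt_of_lt_of_le hlam_pos hρ1
  have hαρ : α ≤ ρ * a := (div_le_iff₀ ha).mp hfx
  set f : ℝ := α / a with hf_def
  have hfa : f * a = α := div_mul_cancel₀ α (ne_of_gt ha)
  have hf1 : lam 0 ≤ f := (le_div_iff₀ ha).mpr hlama
  have hf2 : f ≤ ρ := hfx
  have hfpos : 0 < f := lt_of_lt_of_le hlam_pos hf1
  have hrholam1 : ρ < lam 1 := by linarith
  set ε : ℝ := (ρ - lam 0) / lam 0 with hε_def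
  have hε0 : 0 ≤ ε := div_nonneg (by linarith) hlam_pos.le
  have hepslam : lam 0 * ε = ρ - lam 0 := by
    rw [hε_def, mul_div_cancel₀ _ (ne_of_gt hlam_pos)]
  set T : ℝ := q - f * m with hT_def
  have hT_sum : T = ∑ i, (lam i - f) * (d i * c i) := by
    rw [hT_def, hq_sum, hm_sum, Finset.mul_sum, ← Finset.sum_sub_distrib]
    apply Finset.sum_congr rfl; intro i _; ring
  -- Cauchy--Schwarz
  have hβ_sum : β = ∑ i, lam i * d i ^ 2 := by
    rw [hβ_def, hBA v v]; apply Finset.sum_congr rfl; intro i _; rw [sq]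
  set G : ℝ := ∑ i, (lam i - f) ^ 2 / lam i * c i ^ 2 with hG_def
  have hCS : T ^ 2 ≤ β * G := by
    have h := Finset.sum_mul_sq_le_sq_mul_sq Finset.univ
      (fun i => Real.sqrt (lam i) * d i) (fun i => (lam i - f) / Real.sqrt (lam i) * c i)
    have e1 : ∀ i ∈ Finset.univ, (Real.sqrt (lam i) * d i) * ((lam i - f) / Real.sqrt (lam i) * c i)
        = (lam i - f) * (d i * c i) := by
      intro i _
      have hs : Real.sqrt (lam i) ≠ 0 := ne_of_gt (Real.sqrt_pos.mpr (hlami i))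
      field_simp
    have e2 : ∀ i ∈ Finset.univ, (Real.sqrt (lam i) * d i) ^ 2 = lam i * d i ^ 2 := by
      intro i _
      rw [mul_pow, Real.sq_sqrt (hlami i).le]
    have e3 : ∀ i ∈ Finset.univ, ((lam i - f) / Real.sqrt (lam i) * c i) ^ 2
        = (lam i - f) ^ 2 / lam i * c i ^ 2 := by
      intro i _
      rw [mul_pow, div_pow, Real.sq_sqrt (hlami i).le]
    rw [Finset.sum_congr rfl e1, Finset.sum_congr rfl e2, Finset.sum_congr rfl e3] at h
    rw [hT_sum, hβ_sum, hG_def]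
    exact h
  have hG0 : 0 ≤ G := by
    rw [hG_def]
    apply Finset.sum_nonneg
    intro i _
    exact mul_nonneg (div_nonneg (sq_nonneg _) (hlami i).le) (sq_nonneg _)
  -- bound G ≤ ρ * ε * a
  have hc0a : c 0 ^ 2 ≤ a := by
    rw [ha_sum]
    exact Finset.single_le_sum (f := fun i => c i ^ 2) (fun i _ => sq_nonneg _) (Finset.mem_univ 0)
  have htail : ∀ i : Fin (n+1),
      (lam i.succ - f) ^ 2 / lam i.succ * c i.succ ^ 2 ≤ (lam i.succ - lam 0) * c i.succ ^ 2 := by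
    intro i
    have h1le : (1 : Fin (n+2)) ≤ i.succ := by
      rw [Fin.le_def, Fin.val_one, Fin.val_succ]; omega
    have h1 : lam 1 ≤ lam i.succ := hmono h1le
    have hfi : f ≤ lam i.succ := le_trans hf2 (le_trans hrholam1.le h1)
    have key : (lam i.succ - f) ^ 2 / lam i.succ ≤ lam i.succ - lam 0 := by
      rw [div_le_iff₀ (hlami _), pow_two]
      exact mul_le_mul (by linarith) (by linarith) (by linarith) (by linarith [hlamle i.succ])
    exact mul_le_mul_of_nonneg_right key (sq_nonneg _)
  have hsum_all : ∑ i, (lam i - lam 0) * c i ^ 2 = α - lam 0 * a := by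
    rw [hα_sum, ha_sum, Finset.mul_sum, ← Finset.sum_sub_distrib]
    apply Finset.sum_congr rfl; intro i _; ring
  have hG_le : G ≤ ρ * ε * a := by
    have hsplit : G = (lam 0 - f) ^ 2 / lam 0 * c 0 ^ 2
        + ∑ i : Fin (n+1), (lam i.succ - f) ^ 2 / lam i.succ * c i.succ ^ 2 :=
      Fin.sum_univ_succ _
    have hsplit2 : ∑ i, (lam i - lam 0) * c i ^ 2
        = (lam 0 - lam 0) * c 0 ^ 2 + ∑ i : Fin (n+1), (lam i.succ - lam 0) * c i.succ ^ 2 :=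
      Fin.sum_univ_succ _
    have htail_sum : ∑ i : Fin (n+1), (lam i.succ - f) ^ 2 / lam i.succ * c i.succ ^ 2
        ≤ α - lam 0 * a := by
      calc ∑ i : Fin (n+1), (lam i.succ - f) ^ 2 / lam i.succ * c i.succ ^ 2
          ≤ ∑ i : Fin (n+1), (lam i.succ - lam 0) * c i.succ ^ 2 :=
            Finset.sum_le_sum (fun i _ => htail i)
        _ = α - lam 0 * a := by
            rw [← hsum_all, hsplit2]; ring
    have h0 : (lam 0 - f) ^ 2 / lam 0 * c 0 ^ 2 ≤ (f - lam 0) * ε * a := by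
      have h01 : (lam 0 - f) ^ 2 / lam 0 ≤ (f - lam 0) * ε := by
        rw [div_le_iff₀ hlam_pos]
        have e0 : (lam 0 - f) ^ 2 = (f - lam 0) * (f - lam 0) := by ring
        rw [e0]
        calc (f - lam 0) * (f - lam 0) ≤ (f - lam 0) * (ρ - lam 0) :=
              mul_le_mul_of_nonneg_left (by linarith) (by linarith)
          _ = (f - lam 0) * ε * lam 0 := by rw [← hepslam]; ring
      have h02 : 0 ≤ (f - lam 0) * ε := mul_nonneg (by linarith) hε0
      calc (lam 0 - f) ^ 2 / lam 0 * c 0 ^ 2 ≤ (f - lam 0) * ε * c 0 ^ 2 :=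
            mul_le_mul_of_nonneg_right h01 (sq_nonneg _)
        _ ≤ (f - lam 0) * ε * a := mul_le_mul_of_nonneg_left hc0a h02
    have hαfa : α - lam 0 * a = (f - lam 0) * a := by rw [← hfa]; ring
    rw [hsplit]
    have hρeq : ρ = lam 0 * ε + lam 0 := by linarith [hepslam]
    have : (f - lam 0) * ε * a + (α - lam 0 * a) ≤ ρ * ε * a := by
      rw [hαfa]
      have e1 : (f - lam 0) * ε * a + (f - lam 0) * a = (f - lam 0) * ((ε + 1) * a) := by ring
      have e2 : ρ * ε * a = (ρ - lam 0) * ((ε + 1) * a) := by rw [hρeq]; ring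
      rw [e1, e2]
      exact mul_le_mul_of_nonneg_right (by linarith)
        (mul_nonneg (by linarith) ha.le)
    linarith [h0, htail_sum]
  have hβν : β ≤ νmax := by
    have := (hν v).2; rwa [hvunit, mul_one] at this
  have hβ0 : 0 ≤ β := by
    have := (hν v).1; rw [hvunit, mul_one] at this; linarith
  have hT2 : T ^ 2 ≤ νmax * (ρ * ε * a) := by
    calc T ^ 2 ≤ β * G := hCS
      _ ≤ νmax * G := mul_le_mul_of_nonneg_right hβν hG0
      _ ≤ νmax * (ρ * ε * a) := mul_le_mul_of_nonneg_left hG_le hνmax.le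
  set S : ℝ := Real.sqrt (νmax * (ρ * ε * a)) with hS_def
  have hTS : |T| ≤ S := by
    rw [← Real.sqrt_sq_eq_abs]
    exact Real.sqrt_le_sqrt hT2
  have hS0 : 0 ≤ S := Real.sqrt_nonneg _
  -- square-root quantities
  set sα : ℝ := Real.sqrt α with hsα
  set sβ : ℝ := Real.sqrt β with hsβ
  set sν : ℝ := Real.sqrt νmax with hsν
  set sρ : ℝ := Real.sqrt ρ with hsρ
  set sε : ℝ := Real.sqrt ε with hsε
  set sa : ℝ := Real.sqrt a with hsa
  have hSfact : S = sν * (sρ * (sε * sa)) := by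
    rw [hS_def, hsν, hsρ, hsε, hsa,
      show νmax * (ρ * ε * a) = νmax * (ρ * (ε * a)) from by ring,
      Real.sqrt_mul hνmax.le, Real.sqrt_mul hρpos.le, Real.sqrt_mul hε0]
  have hsν2 : sν * sν = νmax := Real.mul_self_sqrt hνmax.le
  have hsρ2 : sρ * sρ = ρ := Real.mul_self_sqrt hρpos.le
  have hsα2 : sα * sα = α := Real.mul_self_sqrt hαpos.le
  have hsa2 : sa * sa = a := Real.mul_self_sqrt ha.le
  have hsβν : sβ ≤ sν := Real.sqrt_le_sqrt hβν
  have hsβ0 : 0 ≤ sβ := Real.sqrt_nonneg _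
  have hsα0 : 0 ≤ sα := Real.sqrt_nonneg _
  have hsν0 : 0 ≤ sν := Real.sqrt_nonneg _
  have hsρ0 : 0 ≤ sρ := Real.sqrt_nonneg _
  have hsε0 : 0 ≤ sε := Real.sqrt_nonneg _
  have hsa0 : 0 ≤ sa := Real.sqrt_nonneg _
  have hναsq : νmin ≤ sα * sα := by rw [hsα2]; exact hαν
  have hsαρa : sα ≤ sρ * sa := by
    rw [hsα, hsρ, hsa, ← Real.sqrt_mul hρpos.le]
    exact Real.sqrt_le_sqrt hαρ
  -- term (ii)
  have hii : cΘ * sβ * sα * S * νmin ≤ νmax * ρ * (sε * cΘ) * (α * a) := by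
    rw [hSfact]
    calc cΘ * sβ * sα * (sν * (sρ * (sε * sa))) * νmin
        ≤ cΘ * sν * sα * (sν * (sρ * (sε * sa))) * (sα * sα) := by
          apply mul_le_mul
          · apply mul_le_mul_of_nonneg_right _ (by positivity)
            apply mul_le_mul_of_nonneg_right _ hsα0
            exact mul_le_mul_of_nonneg_left hsβν hcΘ0
          · exact hναsq
          · exact hνmin.le
          · positivity
      _ = (sν * sν) * sρ * sε * cΘ * ((sα * sα) * sa) * sα := by ring
      _ ≤ (sν * sν) * sρ * sε * cΘ * ((sα * sα) * sa) * (sρ * sa) := by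
          apply mul_le_mul_of_nonneg_left hsαρa
          positivity
      _ = νmax * ρ * (sε * cΘ) * (α * a) := by
          rw [← hsν2, ← hsρ2, ← hsα2, ← hsa2]; ring
  -- term (i)
  have hS2 : S * S = νmax * (ρ * ε * a) := Real.mul_self_sqrt (by positivity)
  have hi : S * S * νmin ≤ νmax * ρ * ε * (α * a) := by
    rw [hS2]
    calc νmax * (ρ * ε * a) * νmin ≤ νmax * (ρ * ε * a) * α :=
          mul_le_mul_of_nonneg_left (le_trans hαν (le_refl α)) (by positivity)
      _ = νmax * ρ * ε * (α * a) := by ring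
  -- key inequality
  have hq0 : 0 ≤ cΘ * sβ * sα := by positivity
  have key : (|q| + |T|) * |T| * νmin ≤ νmax * ρ * (ε + sε * cΘ) * (α * a) := by
    have h1 : (|q| + |T|) * |T| ≤ (cΘ * sβ * sα + S) * S := by
      apply mul_le_mul (add_le_add hangle hTS) hTS (abs_nonneg _) (by positivity)
    calc (|q| + |T|) * |T| * νmin ≤ (cΘ * sβ * sα + S) * S * νmin :=
          mul_le_mul_of_nonneg_right h1 hνmin.le
      _ = cΘ * sβ * sα * S * νmin + S * S * νmin := by ring
      _ ≤ νmax * ρ * (sε * cΘ) * (α * a) + νmax * ρ * ε * (α * a) := add_le_add hii hi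
      _ = νmax * ρ * (ε + sε * cΘ) * (α * a) := by ring
  -- conclude
  have hvT : v ⬝ᵥ (A *ᵥ x - f • (M *ᵥ x)) = T := by
    rw [dotProduct_sub, dotProduct_smul, smul_eq_mul, hT_def, hq_def, hm_def]
  rw [hvT]
  have habs : |8 * m / a ^ 2 * T| = 8 * |m| * |T| / a ^ 2 := by
    rw [abs_mul, abs_div, abs_mul]
    rw [abs_of_nonneg (by norm_num : (0:ℝ) ≤ 8), abs_of_nonneg (by positivity : (0:ℝ) ≤ a ^ 2)]
    ring
  rw [habs]
  rw [div_le_iff₀ (by positivity : (0:ℝ) < a ^ 2)]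
  -- goal : 8 * |m| * |T| ≤ RHS * a^2
  have hfm : f * |m| ≤ |q| + |T| := by
    have h1 : f * m = q - T := by rw [hT_def]; ring
    calc f * |m| = |f * m| := by rw [abs_mul, abs_of_pos hfpos]
      _ = |q - T| := by rw [h1]
      _ ≤ |q| + |T| := abs_sub _ _
  have h9 : f * (|m| * |T| * νmin) ≤ f * (νmax * ρ * (ε + sε * cΘ) * (a * a)) := by
    have h91 : f * |m| * |T| * νmin ≤ (|q| + |T|) * |T| * νmin := by
      apply mul_le_mul_of_nonneg_right _ hνmin.le
      exact mul_le_mul_of_nonneg_right hfm (abs_nonneg _)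
    have h92 : νmax * ρ * (ε + sε * cΘ) * (α * a) = f * (νmax * ρ * (ε + sε * cΘ) * (a * a)) := by
      rw [← hfa]; ring
    calc f * (|m| * |T| * νmin) = f * |m| * |T| * νmin := by ring
      _ ≤ (|q| + |T|) * |T| * νmin := h91
      _ ≤ νmax * ρ * (ε + sε * cΘ) * (α * a) := key
      _ = f * (νmax * ρ * (ε + sε * cΘ) * (a * a)) := h92
  have h10 : |m| * |T| * νmin ≤ νmax * ρ * (ε + sε * cΘ) * (a * a) :=
    le_of_mul_le_mul_left h9 hfpos
  have hRHS : 8 * (νmax / νmin) * ρ * (ε + sε * cΘ) * a ^ 2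
      = 8 * (νmax * ρ * (ε + sε * cΘ) * (a * a)) / νmin := by
    field_simp
  rw [hRHS, le_div_iff₀ hνmin]
  calc 8 * |m| * |T| * νmin = 8 * (|m| * |T| * νmin) := by ring
    _ ≤ 8 * (νmax * ρ * (ε + sε * cΘ) * (a * a)) := by linarith [h10]
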